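/- If λ is a left eigenvalue of the companion matrix C_{f_l} of the monic left quaternionic polynomial f_l(z) = zⁿ + q_n z^{n−1} + ⋯ + q₂ z + q₁, then f_l(λ) = 0. -/

import Mathlib

open scoped Quaternion
open Finset Matrix

noncomputable def specNorm {n : ℕ} (A : Matrix (Fin n) (Fin n) ℍ[ℝ]) : ℝ :=
  sSup {r : ℝ | ∃ x : Fin n → ℍ[ℝ], x ≠ 0 ∧
    r = Real.sqrt (∑ i, ‖A.mulVec x i‖ ^ 2) / Real.sqrt (∑ i, ‖x i‖ ^ 2)}

theorem leftEig_companion_is_zero (n : ℕ) (hn : 1 ≤ n) (q : ℕ → ℍ[ℝ])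
    (C : Matrix (Fin n) (Fin n) ℍ[ℝ])
    (hC : ∀ i j : Fin n, C i j =
      if (i : ℕ) = n - 1 then -q ((j : ℕ) + 1)
      else if (j : ℕ) = (i : ℕ) + 1 then 1 else 0)
    (lam : ℍ[ℝ]) (x : Fin n → ℍ[ℝ]) (hx : x ≠ 0)
    (h : C.mulVec x = fun i => lam * x i) :
    lam ^ n + ∑ i ∈ Finset.Icc 1 n, q i * lam ^ (i - 1) = 0 := by
  have h0 : (0 : ℕ) < n := hn
  set x0 := x ⟨0, h0⟩ with hx0def
  -- every coordinate is lam^k * x0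
  have key : ∀ k : ℕ, ∀ hk : k < n, x ⟨k, hk⟩ = lam ^ k * x0 := by
    intro k
    induction k with
    | zero => intro hk; simp [hx0def]
    | succ k ih =>
      intro hk
      have hk' : k < n := Nat.lt_of_succ_lt hk
      have hkne : k ≠ n - 1 := by omega
      have hrow := congrFun h ⟨k, hk'⟩
      have hm : (C.mulVec x) ⟨k, hk'⟩ = x ⟨k + 1, hk⟩ := by
        simp only [Matrix.mulVec, dotProduct]
        have : ∀ j : Fin n, C ⟨k, hk'⟩ j * x j =
            if j = ⟨k + 1, hk⟩ then x j else 0 := by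
          intro j
          rw [hC]
          simp only [hkne, if_false]
          by_cases hj : j = ⟨k + 1, hk⟩
          · subst hj; simp
          · have : (j : ℕ) ≠ k + 1 := by
              intro hc; exact hj (Fin.ext hc)
            simp [this, hj]
        rw [Finset.sum_congr rfl fun j _ => this j, Finset.sum_ite_eq']
        simp
      rw [hm] at hrow
      rw [hrow, ih hk', ← mul_assoc, ← pow_succ']
  -- x0 ≠ 0
  have hx0 : x0 ≠ 0 := by
    intro h0'
    apply hx
    funext j
    have := key j j.isLt
    rw [Fin.eta] at this
    simp [this, h0']
  -- last row
  have hlast : n - 1 < n := by omega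
  have hrow := congrFun h ⟨n - 1, hlast⟩
  have hm : (C.mulVec x) ⟨n - 1, hlast⟩ = ∑ j : Fin n, -q ((j : ℕ) + 1) * x j := by
    simp only [Matrix.mulVec, dotProduct]
    refine Finset.sum_congr rfl fun j _ => ?_
    rw [hC]; simp
  rw [hm] at hrow
  have hxl : x ⟨n - 1, hlast⟩ = lam ^ (n - 1) * x0 := key _ _
  have hsum : ∀ j : Fin n, -q ((j : ℕ) + 1) * x j = -(q ((j : ℕ) + 1) * lam ^ (j : ℕ)) * x0 := by
    intro j
    have := key j j.isLt
    rw [Fin.eta] at this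
    rw [this, neg_mul, neg_mul, mul_assoc]
  rw [Finset.sum_congr rfl fun j _ => hsum j, hxl, ← mul_assoc] at hrow
  have hpow : lam * lam ^ (n - 1) = lam ^ n := by
    rw [← pow_succ']
    congr 1
    omega
  rw [hpow, ← Finset.sum_mul] at hrow
  rw [Finset.sum_neg_distrib, neg_mul] at hrow
  have hfac : (lam ^ n + ∑ j : Fin n, q ((j : ℕ) + 1) * lam ^ (j : ℕ)) * x0 = 0 := by
    rw [add_mul, ← hrow, neg_add_cancel]
  have hz : lam ^ n + ∑ j : Fin n, q ((j : ℕ) + 1) * lam ^ (j : ℕ) = 0 := by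
    rcases mul_eq_zero.mp hfac with h' | h'
    · exact h'
    · exact absurd h' hx0
  have hre : ∑ i ∈ Finset.Icc 1 n, q i * lam ^ (i - 1)
      = ∑ j : Fin n, q ((j : ℕ) + 1) * lam ^ (j : ℕ) := by
    rw [show (∑ j : Fin n, q ((j : ℕ) + 1) * lam ^ (j : ℕ))
        = ∑ j ∈ Finset.range n, q (j + 1) * lam ^ j from
      Fin.sum_univ_eq_sum_range (fun j => q (j + 1) * lam ^ j) n,
      ← Finset.Ico_add_one_right_eq_Icc, Finset.sum_Ico_eq_sum_range]
    simp [add_comm]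
  rw [hre]
  exact hz
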